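/- arXiv:1803.01075 — 2 statements merged into one kernel-verified Lean document; each statement's English description precedes it below -/
import Mathlib

section
/- Let Q be an inverse quantal frame and X a principal Q-sheaf. For all local bisections s, s', t ∈ 𝔅_X with 1_Q·s = 1_Q·s' = 1_Q·t, one has ⟨s ∧ s', t⟩ = ⟨s,t⟩ ∧ ⟨s',t⟩. -/
/-- A unital involutive quantale: a complete lattice with an associative
multiplication preserving arbitrary joins in each variable, a unit `e`, and a
join-preserving involution. -/
structure Quantale' (Q : Type*) [CompleteLattice Q] where
  mul : Q → Q → Q
  e : Q
  star : Q → Q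
  mul_assoc : ∀ a b c, mul (mul a b) c = mul a (mul b c)
  sSup_mul : ∀ (S : Set Q) (b : Q), mul (sSup S) b = ⨆ a ∈ S, mul a b
  mul_sSup : ∀ (a : Q) (S : Set Q), mul a (sSup S) = ⨆ b ∈ S, mul a b
  e_mul : ∀ a, mul e a = a
  mul_e : ∀ a, mul a e = a
  star_star : ∀ a, star (star a) = a
  star_mul : ∀ a b, star (mul a b) = mul (star b) (star a)
  star_sSup : ∀ S : Set Q, star (sSup S) = ⨆ a ∈ S, star a

/-- The set of partial units of a quantale. -/
def Quantale'.PU {Q : Type*} [CompleteLattice Q] (Qs : Quantale' Q) : Set Q :=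
  {s | Qs.mul s (Qs.star s) ≤ Qs.e ∧ Qs.mul (Qs.star s) s ≤ Qs.e}

/-- An inverse quantal frame: a unital involutive quantale which is a frame,
has a stable support, and whose partial units join to the top. -/
structure InverseQuantalFrame (Q : Type*) [Order.Frame Q] extends Quantale' Q where
  supp : Q → Q
  supp_le_e : ∀ a, supp a ≤ e
  supp_sSup : ∀ S : Set Q, supp (sSup S) = ⨆ a ∈ S, supp a
  supp_le_mul_star : ∀ a, supp a ≤ mul a (star a)
  le_supp_mul : ∀ a, a ≤ mul (supp a) a
  supp_stable : ∀ b a, b ≤ e → supp (mul b a) = mul b (supp a)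
  sSup_PU : sSup {s | mul s (star s) ≤ e ∧ mul (star s) s ≤ e} = ⊤

/-- A left module over a quantale: a complete lattice with a unital associative
action preserving arbitrary joins in each variable. -/
structure QuantaleModule {Q : Type*} [CompleteLattice Q] (Qs : Quantale' Q)
    (X : Type*) [CompleteLattice X] where
  act : Q → X → X
  act_mul : ∀ a b x, act (Qs.mul a b) x = act a (act b x)
  act_e : ∀ x, act Qs.e x = x
  sSup_act : ∀ (S : Set Q) (x : X), act (sSup S) x = ⨆ a ∈ S, act a x
  act_sSup : ∀ (a : Q) (S : Set X), act a (sSup S) = ⨆ x ∈ S, act a x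

/-- A pre-Hilbert module over a quantale. -/
structure PreHilbertModule {Q : Type*} [CompleteLattice Q] (Qs : Quantale' Q)
    (X : Type*) [CompleteLattice X] extends QuantaleModule Qs X where
  inner : X → X → Q
  inner_act : ∀ a x y, inner (act a x) y = Qs.mul a (inner x y)
  sSup_inner : ∀ (S : Set X) (y : X), inner (sSup S) y = ⨆ x ∈ S, inner x y
  inner_star : ∀ x y, inner x y = Qs.star (inner y x)

namespace PreHilbertModule

variable {Q X : Type*} [CompleteLattice Q] [CompleteLattice X] {Qs : Quantale' Q}

/-- A Hilbert section: `⟨x,s⟩s ≤ x` for all `x`. -/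
def IsHilbertSection (H : PreHilbertModule Qs X) (s : X) : Prop :=
  ∀ x, H.act (H.inner x s) s ≤ x

/-- A regular element: `⟨s,s⟩s = s`. -/
def IsRegularSection (H : PreHilbertModule Qs X) (s : X) : Prop :=
  H.act (H.inner s s) s = s

/-- A Hilbert basis: `x = ⋁_{t ∈ S} ⟨x,t⟩t` for all `x`. -/
def IsHilbertBasis (H : PreHilbertModule Qs X) (S : Set X) : Prop :=
  ∀ x, x = ⨆ t ∈ S, H.act (H.inner x t) t

/-- Non-degeneracy of the inner product. -/
def Nondegenerate (H : PreHilbertModule Qs X) : Prop :=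
  ∀ x y, (∀ z, H.inner x z = H.inner y z) → x = y

end PreHilbertModule

/-- A `Q`-locale over an inverse quantal frame: a module which is a frame and
satisfies the anchor condition. -/
structure QLocale {Q : Type*} [Order.Frame Q] (Qf : InverseQuantalFrame Q)
    (X : Type*) [Order.Frame X] extends QuantaleModule Qf.toQuantale' X where
  anchor : ∀ b x, b ≤ Qf.e → act b x = act b ⊤ ⊓ x

/-- A `Q`-sheaf over an inverse quantal frame: a pre-Hilbert module which is a
frame, satisfies the anchor condition, and has a Hilbert basis. -/
structure QSheaf {Q : Type*} [Order.Frame Q] (Qf : InverseQuantalFrame Q)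
    (X : Type*) [Order.Frame X] extends PreHilbertModule Qf.toQuantale' X where
  anchor : ∀ b x, b ≤ Qf.e → act b x = act b ⊤ ⊓ x
  hasBasis : ∃ S : Set X, ∀ x, x = ⨆ t ∈ S, act (inner x t) t

namespace QSheaf

variable {Q X : Type*} [Order.Frame Q] [Order.Frame X] {Qf : InverseQuantalFrame Q}

/-- The support `ς_X(x) = ⟨x,x⟩ ∧ e` of a `Q`-sheaf. -/
def sppX (H : QSheaf Qf X) (x : X) : Q := H.inner x x ⊓ Qf.e

/-- A local section: `ς_X(x)s = x` for all `x ≤ s`. -/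
def IsLocalSection (H : QSheaf Qf X) (s : X) : Prop :=
  ∀ x ≤ s, H.act (H.sppX x) s = x

/-- A principal section: a local section with `⟨s,s⟩ ≤ e`. -/
def IsPrincipalSection (H : QSheaf Qf X) (s : X) : Prop :=
  H.IsLocalSection s ∧ H.inner s s ≤ Qf.e

/-- A right local section: `x = s ∧ 1_Q·x` for all `x ≤ s`. -/
def IsRightLocalSection (H : QSheaf Qf X) (s : X) : Prop :=
  ∀ x ≤ s, x = s ⊓ H.act ⊤ x

/-- A local bisection: simultaneously a local section and a right local section. -/
def IsBisection (H : QSheaf Qf X) (s : X) : Prop :=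
  H.IsLocalSection s ∧ H.IsRightLocalSection s

end QSheaf

section Aux

/-- A map preserving arbitrary sSups preserves indexed sups. -/
lemma sSupHom_iSup {α β : Type*} [CompleteLattice α] [CompleteLattice β]
    {f : α → β} (hf : ∀ S : Set α, f (sSup S) = ⨆ a ∈ S, f a)
    {ι : Sort*} (g : ι → α) : f (⨆ i, g i) = ⨆ i, f (g i) := by
  rw [iSup, hf]
  exact iSup_range

/-- A map preserving arbitrary sSups is monotone. -/
lemma sSupHom_mono {α β : Type*} [CompleteLattice α] [CompleteLattice β]
    {f : α → β} (hf : ∀ S : Set α, f (sSup S) = ⨆ a ∈ S, f a)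
    {a b : α} (h : a ≤ b) : f a ≤ f b := by
  have h2 := hf {a, b}
  rw [sSup_pair, sup_eq_right.mpr h] at h2
  rw [h2]
  exact le_biSup _ (by simp)

variable {Q : Type*} [Order.Frame Q] (Qf : InverseQuantalFrame Q)

lemma q_mul_mono {a b c d : Q} (h1 : a ≤ b) (h2 : c ≤ d) :
    Qf.mul a c ≤ Qf.mul b d := by
  have hl : Qf.mul a c ≤ Qf.mul b c :=
    sSupHom_mono (f := fun x => Qf.mul x c) (fun S => Qf.sSup_mul S c) h1
  have hr : Qf.mul b c ≤ Qf.mul b d :=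
    sSupHom_mono (f := fun x => Qf.mul b x) (Qf.mul_sSup b) h2
  exact hl.trans hr

lemma q_star_mono {a b : Q} (h : a ≤ b) : Qf.star a ≤ Qf.star b :=
  sSupHom_mono Qf.star_sSup h

lemma q_star_e : Qf.star Qf.e = Qf.e := by
  have key : ∀ a, Qf.mul (Qf.star Qf.e) a = a := by
    intro a
    calc Qf.mul (Qf.star Qf.e) a
        = Qf.mul (Qf.star Qf.e) (Qf.star (Qf.star a)) := by rw [Qf.star_star]
      _ = Qf.star (Qf.mul (Qf.star a) Qf.e) := (Qf.star_mul _ _).symm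
      _ = Qf.star (Qf.star a) := by rw [Qf.mul_e]
      _ = a := Qf.star_star a
  have := key Qf.e
  rwa [Qf.mul_e] at this

lemma q_supp_e : Qf.supp Qf.e = Qf.e := by
  refine le_antisymm (Qf.supp_le_e _) ?_
  have := Qf.le_supp_mul Qf.e
  rwa [Qf.mul_e] at this

lemma q_supp_of_le_e {b : Q} (hb : b ≤ Qf.e) : Qf.supp b = b := by
  have h := Qf.supp_stable b Qf.e hb
  rwa [Qf.mul_e, q_supp_e, Qf.mul_e] at h

lemma q_star_of_le_e {b : Q} (hb : b ≤ Qf.e) : Qf.star b = b := by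
  have h1 : ∀ c, c ≤ Qf.e → c ≤ Qf.star c := by
    intro c hc
    calc c = Qf.supp c := (q_supp_of_le_e Qf hc).symm
      _ ≤ Qf.mul c (Qf.star c) := Qf.supp_le_mul_star c
      _ ≤ Qf.mul Qf.e (Qf.star c) := q_mul_mono Qf hc le_rfl
      _ = Qf.star c := Qf.e_mul _
  have hb' : Qf.star b ≤ Qf.e := by
    have := q_star_mono Qf hb
    rwa [q_star_e] at this
  refine le_antisymm ?_ (h1 b hb)
  have := h1 _ hb'
  rwa [Qf.star_star] at this

lemma q_sq_of_le_e {b : Q} (hb : b ≤ Qf.e) : Qf.mul b b = b := by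
  refine le_antisymm ?_ ?_
  · calc Qf.mul b b ≤ Qf.mul Qf.e b := q_mul_mono Qf hb le_rfl
      _ = b := Qf.e_mul b
  · calc b ≤ Qf.mul (Qf.supp b) b := Qf.le_supp_mul b
      _ = Qf.mul b b := by rw [q_supp_of_le_e Qf hb]

lemma q_mul_of_le_e {b c : Q} (hb : b ≤ Qf.e) (hc : c ≤ Qf.e) :
    Qf.mul b c = b ⊓ c := by
  refine le_antisymm (le_inf ?_ ?_) ?_
  · calc Qf.mul b c ≤ Qf.mul b Qf.e := q_mul_mono Qf le_rfl hc
      _ = b := Qf.mul_e b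
  · calc Qf.mul b c ≤ Qf.mul Qf.e c := q_mul_mono Qf hb le_rfl
      _ = c := Qf.e_mul c
  · calc b ⊓ c = Qf.mul (b ⊓ c) (b ⊓ c) := (q_sq_of_le_e Qf (inf_le_left.trans hb)).symm
      _ ≤ Qf.mul b c := q_mul_mono Qf inf_le_left inf_le_right

lemma q_le_triple (a : Q) : a ≤ Qf.mul (Qf.mul a (Qf.star a)) a := by
  calc a ≤ Qf.mul (Qf.supp a) a := Qf.le_supp_mul a
    _ ≤ Qf.mul (Qf.mul a (Qf.star a)) a := q_mul_mono Qf (Qf.supp_le_mul_star a) le_rfl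

lemma q_pu_triple {v : Q} (h1 : Qf.mul v (Qf.star v) ≤ Qf.e) :
    Qf.mul (Qf.mul v (Qf.star v)) v = v := by
  refine le_antisymm ?_ (q_le_triple Qf v)
  calc Qf.mul (Qf.mul v (Qf.star v)) v ≤ Qf.mul Qf.e v := q_mul_mono Qf h1 le_rfl
    _ = v := Qf.e_mul v

/-- Every element is the join of the partial units below it. -/
lemma q_pu_decomp (a : Q) :
    a = ⨆ w ∈ {s : Q | Qf.mul s (Qf.star s) ≤ Qf.e ∧ Qf.mul (Qf.star s) s ≤ Qf.e},
      a ⊓ w := by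
  conv_lhs => rw [← inf_top_eq a, ← Qf.sSup_PU]
  exact inf_sSup_eq

end Aux

section ModAux

variable {Q X : Type*} [Order.Frame Q] [Order.Frame X] {Qf : InverseQuantalFrame Q}
  (H : QSheaf Qf X)

lemma m_act_mono_left {a b : Q} (x : X) (h : a ≤ b) : H.act a x ≤ H.act b x :=
  sSupHom_mono (f := fun c => H.act c x) (fun S => H.sSup_act S x) h

lemma m_act_mono_right (a : Q) {x y : X} (h : x ≤ y) : H.act a x ≤ H.act a y :=
  sSupHom_mono (f := fun z => H.act a z) (H.act_sSup a) h

lemma m_inner_mono_left {x y : X} (z : X) (h : x ≤ y) : H.inner x z ≤ H.inner y z :=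
  sSupHom_mono (f := fun w => H.inner w z) (fun S => H.sSup_inner S z) h

lemma m_star_inner (x y : X) : Qf.star (H.inner x y) = H.inner y x :=
  (H.inner_star y x).symm

lemma m_inner_mono_right (x : X) {y z : X} (h : y ≤ z) : H.inner x y ≤ H.inner x z := by
  rw [H.inner_star x y, H.inner_star x z]
  exact q_star_mono Qf (m_inner_mono_left H x h)

/-- Elements of a Hilbert basis are Hilbert sections. -/
lemma m_basis_hilbert {S : Set X}
    (hS : ∀ x, x = ⨆ t ∈ S, H.act (H.inner x t) t) {u : X} (hu : u ∈ S) (x : X) :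
    H.act (H.inner x u) u ≤ x := by
  conv_rhs => rw [hS x]
  exact le_biSup (fun t => H.act (H.inner x t) t) hu

/-- For a basis element `u`, `ς_X(u)·u = u`. -/
lemma m_basis_supp {S : Set X}
    (hS : ∀ x, x = ⨆ t ∈ S, H.act (H.inner x t) t) {u : X} (hu : u ∈ S) :
    H.act (H.sppX u) u = u := by
  refine le_antisymm ?_ ?_
  · calc H.act (H.sppX u) u ≤ H.act Qf.e u :=
        m_act_mono_left H u inf_le_right
      _ = u := H.act_e u
  · conv_lhs => rw [hS u]
    refine iSup₂_le fun w hw => ?_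
    set a := H.inner u w with ha
    have hterm : H.act a w ≤ u := m_basis_hilbert H hS hw u
    have hsupp : Qf.supp a ≤ H.sppX u := by
      refine le_inf ?_ (Qf.supp_le_e a)
      calc Qf.supp a ≤ Qf.mul a (Qf.star a) := Qf.supp_le_mul_star a
        _ = Qf.mul a (H.inner w u) := by rw [ha, m_star_inner]
        _ = H.inner (H.act a w) u := (H.inner_act a w u).symm
        _ ≤ H.inner u u := m_inner_mono_left H u hterm
        _ = H.inner u u := rfl
    calc H.act a w ≤ H.act (Qf.mul (Qf.supp a) a) w :=
        m_act_mono_left H w (Qf.le_supp_mul a)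
      _ = H.act (Qf.supp a) (H.act a w) := H.act_mul _ _ _
      _ ≤ H.act (H.sppX u) u := by
          refine (m_act_mono_left H _ hsupp).trans (m_act_mono_right H _ hterm)

/-- KEY LEMMA: every local section of a `Q`-sheaf is a Hilbert section. -/
lemma local_hilbert (t : X) (ht : H.IsLocalSection t) (x : X) :
    H.act (H.inner x t) t ≤ x := by
  obtain ⟨S, hS⟩ := H.hasBasis
  set PUs : Set Q :=
    {s : Q | Qf.mul s (Qf.star s) ≤ Qf.e ∧ Qf.mul (Qf.star s) s ≤ Qf.e} with hPUs
  set T : Set X :=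
    {p : X | ∃ u ∈ S, ∃ v ∈ PUs, v ≤ H.inner t u ∧ p = H.act v u} with hT
  -- every piece is below t
  have hTt : ∀ p ∈ T, p ≤ t := by
    rintro p ⟨u, hu, v, hv, hvle, rfl⟩
    calc H.act v u ≤ H.act (H.inner t u) u := m_act_mono_left H u hvle
      _ ≤ t := m_basis_hilbert H hS hu t
  -- t is the join of the pieces
  have ht_eq : t = sSup T := by
    refine le_antisymm ?_ (sSup_le hTt)
    conv_lhs => rw [hS t]
    refine iSup₂_le fun u hu => ?_
    have hdec := q_pu_decomp Qf (H.inner t u)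
    rw [show (⨆ w ∈ {s : Q | Qf.mul s (Qf.star s) ≤ Qf.e ∧ Qf.mul (Qf.star s) s ≤ Qf.e},
          H.inner t u ⊓ w) = ⨆ w, ⨆ _ : w ∈ PUs, H.inner t u ⊓ w from rfl] at hdec
    rw [hdec]
    rw [sSupHom_iSup (f := fun c => H.act c u) (fun Sq => H.sSup_act Sq u)]
    refine iSup_le fun w => ?_
    rw [sSupHom_iSup (f := fun c => H.act c u) (fun Sq => H.sSup_act Sq u)]
    refine iSup_le fun hw => ?_
    refine le_sSup ?_
    refine ⟨u, hu, H.inner t u ⊓ w, ?_, inf_le_left, rfl⟩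
    constructor
    · calc Qf.mul (H.inner t u ⊓ w) (Qf.star (H.inner t u ⊓ w))
          ≤ Qf.mul w (Qf.star w) := q_mul_mono Qf inf_le_right (q_star_mono Qf inf_le_right)
        _ ≤ Qf.e := hw.1
    · calc Qf.mul (Qf.star (H.inner t u ⊓ w)) (H.inner t u ⊓ w)
          ≤ Qf.mul (Qf.star w) w := q_mul_mono Qf (q_star_mono Qf inf_le_right) inf_le_right
        _ ≤ Qf.e := hw.2
  -- the core estimate for a pair of pieces
  have core : ∀ p ∈ T, ∀ p' ∈ T, H.act (H.inner x p) p' ≤ x := by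
    rintro p ⟨u, hu, v, hv, hvle, rfl⟩ p' hp'T
    set b : Q := H.sppX u with hb
    have hbe : b ≤ Qf.e := inf_le_right
    have hbb : Qf.mul b b = b := q_sq_of_le_e Qf hbe
    have hbstar : Qf.star b = b := q_star_of_le_e Qf hbe
    set w : Q := Qf.mul v b with hw
    -- `w` acts on u the same way v does
    have hwu : H.act w u = H.act v u := by
      rw [hw, H.act_mul, m_basis_supp H hS hu]
    set p : X := H.act v u with hp
    have hpT : p ∈ T := ⟨u, hu, v, hv, hvle, rfl⟩
    have hpt : p ≤ t := hTt p hpT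
    have hp't : p' ≤ t := hTt p' hp'T
    -- star of w
    have hwstar : Qf.star w = Qf.mul b (Qf.star v) := by
      rw [hw, Qf.star_mul, hbstar]
    -- w w* = v b v*
    have hww : Qf.mul w (Qf.star w) = Qf.mul v (Qf.mul b (Qf.star v)) := by
      rw [hwstar, hw, Qf.mul_assoc, ← Qf.mul_assoc b b, hbb]
    have hwwe : Qf.mul w (Qf.star w) ≤ Qf.e := by
      rw [hww]
      calc Qf.mul v (Qf.mul b (Qf.star v))
          ≤ Qf.mul v (Qf.mul Qf.e (Qf.star v)) := q_mul_mono Qf le_rfl (q_mul_mono Qf hbe le_rfl)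
        _ = Qf.mul v (Qf.star v) := by rw [Qf.e_mul]
        _ ≤ Qf.e := hv.1
    have hwwe' : Qf.mul (Qf.star w) w ≤ Qf.e := by
      rw [hwstar, hw, Qf.mul_assoc, ← Qf.mul_assoc (Qf.star v) v b]
      calc Qf.mul b (Qf.mul (Qf.mul (Qf.star v) v) b)
          ≤ Qf.mul Qf.e (Qf.mul Qf.e Qf.e) :=
            q_mul_mono Qf hbe (q_mul_mono Qf hv.2 hbe)
        _ = Qf.e := by rw [Qf.mul_e, Qf.mul_e]
    -- w w* ≤ ς_X(p)
    have hinpp : Qf.mul w (Qf.mul b (Qf.star w)) = Qf.mul w (Qf.star w) := by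
      rw [hwstar, ← Qf.mul_assoc b b, hbb]
    have hww_le : Qf.mul w (Qf.star w) ≤ H.sppX p := by
      refine le_inf ?_ hwwe
      have h1 : H.inner p p = Qf.mul w (Qf.mul (H.inner u u) (Qf.star w)) := by
        have : H.inner p p = Qf.mul w (H.inner u p) := by
          rw [show p = H.act w u from (hwu.trans hp.symm).symm]
          exact H.inner_act w u _
        rw [this, H.inner_star u p,
          show p = H.act w u from (hwu.trans hp.symm).symm, H.inner_act,
          Qf.star_mul, m_star_inner]
      rw [h1, ← hinpp]
      refine q_mul_mono Qf le_rfl (q_mul_mono Qf ?_ le_rfl)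
      exact inf_le_left
    -- key step: w* · p' ≤ u
    have hkey : H.act (Qf.star w) p' ≤ u := by
      have hm : H.act (Qf.mul w (Qf.star w)) p' ≤ H.act (H.sppX p') p := by
        calc H.act (Qf.mul w (Qf.star w)) p'
            = H.act (Qf.mul w (Qf.star w)) ⊤ ⊓ p' := H.anchor _ _ hwwe
          _ ≤ H.act (H.sppX p) ⊤ ⊓ p' := by
              exact inf_le_inf_right _ (m_act_mono_left H ⊤ hww_le)
          _ = H.act (H.sppX p) p' := (H.anchor _ _ inf_le_right).symm
          _ = H.act (H.sppX p) (H.act (H.sppX p') t) := by rw [ht p' hp't]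
          _ = H.act (Qf.mul (H.sppX p) (H.sppX p')) t := (H.act_mul _ _ _).symm
          _ = H.act (Qf.mul (H.sppX p') (H.sppX p)) t := by
              have hc1 : Qf.mul (H.sppX p) (H.sppX p') = H.sppX p ⊓ H.sppX p' :=
                q_mul_of_le_e Qf inf_le_right inf_le_right
              have hc2 : Qf.mul (H.sppX p') (H.sppX p) = H.sppX p' ⊓ H.sppX p :=
                q_mul_of_le_e Qf inf_le_right inf_le_right
              rw [hc1, hc2, inf_comm]
          _ = H.act (H.sppX p') (H.act (H.sppX p) t) := H.act_mul _ _ _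
          _ = H.act (H.sppX p') p := by rw [ht p hpt]
      have htriple : Qf.mul (Qf.star w) (Qf.mul w (Qf.star w)) = Qf.star w := by
        have h3 := q_pu_triple Qf (v := Qf.star w) (by rwa [Qf.star_star])
        rw [Qf.star_star] at h3
        rw [← Qf.mul_assoc]
        exact h3
      calc H.act (Qf.star w) p'
          = H.act (Qf.mul (Qf.star w) (Qf.mul w (Qf.star w))) p' := by rw [htriple]
        _ = H.act (Qf.star w) (H.act (Qf.mul w (Qf.star w)) p') := H.act_mul _ _ _
        _ ≤ H.act (Qf.star w) (H.act (H.sppX p') p) := m_act_mono_right H _ hm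
        _ ≤ H.act (Qf.star w) p := by
            refine m_act_mono_right H _ ?_
            calc H.act (H.sppX p') p ≤ H.act Qf.e p := m_act_mono_left H p inf_le_right
              _ = p := H.act_e p
        _ = H.act (Qf.mul (Qf.star w) w) u := by
            rw [show p = H.act w u from (hwu.trans hp.symm).symm, ← H.act_mul]
        _ ≤ H.act Qf.e u := m_act_mono_left H u hwwe'
        _ = u := H.act_e u
    -- conclude
    have hxp : H.inner x p = Qf.mul (H.inner x u) (Qf.star w) := by
      rw [H.inner_star x p, show p = H.act w u from (hwu.trans hp.symm).symm,
        H.inner_act, Qf.star_mul, m_star_inner]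
    calc H.act (H.inner x p) p'
        = H.act (H.inner x u) (H.act (Qf.star w) p') := by rw [hxp, H.act_mul]
      _ ≤ H.act (H.inner x u) u := m_act_mono_right H _ hkey
      _ ≤ x := m_basis_hilbert H hS hu x
  -- put everything together
  have hxt : H.inner x t = ⨆ p, ⨆ _ : p ∈ T, H.inner x p := by
    rw [H.inner_star x t, ht_eq, sSup_eq_iSup]
    rw [sSupHom_iSup (f := fun z => H.inner z x) (fun Sx => H.sSup_inner Sx x)]
    rw [sSupHom_iSup (f := Qf.star) Qf.star_sSup]
    refine iSup_congr fun p => ?_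
    rw [sSupHom_iSup (f := fun z => H.inner z x) (fun Sx => H.sSup_inner Sx x)]
    rw [sSupHom_iSup (f := Qf.star) Qf.star_sSup]
    exact iSup_congr fun _ => m_star_inner H p x
  rw [hxt]
  rw [sSupHom_iSup (f := fun c => H.act c t) (fun Sq => H.sSup_act Sq t)]
  refine iSup_le fun p => ?_
  rw [sSupHom_iSup (f := fun c => H.act c t) (fun Sq => H.sSup_act Sq t)]
  refine iSup_le fun hp => ?_
  conv_lhs => rw [ht_eq, H.act_sSup]
  exact iSup₂_le fun p' hp' => core p hp p' hp'

end ModAux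

/-- In a principal `Q`-sheaf, for local bisections `s, s', t`
with equal right supports, `⟨s ∧ s', t⟩ = ⟨s,t⟩ ∧ ⟨s',t⟩`. -/
theorem stmt18 {Q X : Type*} [Order.Frame Q] [Order.Frame X]
    (Qf : InverseQuantalFrame Q) (H : QSheaf Qf X)
    -- X is a principal Q-sheaf (principally covered and a bisheaf):
    (hpc : sSup {s : X | H.IsPrincipalSection s} = ⊤)
    (hbisheaf : sSup {s : X | H.IsRightLocalSection s} = ⊤)
    (s s' t : X)
    (hs : H.IsBisection s) (hs' : H.IsBisection s') (ht : H.IsBisection t)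
    (h1 : H.act ⊤ s = H.act ⊤ t) (h2 : H.act ⊤ s' = H.act ⊤ t) :
    H.inner (s ⊓ s') t = H.inner s t ⊓ H.inner s' t := by
  refine le_antisymm
    (le_inf (m_inner_mono_left H t inf_le_left) (m_inner_mono_left H t inf_le_right)) ?_
  set b : Q := H.inner s t ⊓ H.inner s' t with hbdef
  have hbt : H.act b t ≤ s ⊓ s' := by
    refine le_inf ?_ ?_
    · calc H.act b t ≤ H.act (H.inner s t) t := m_act_mono_left H t inf_le_left
        _ ≤ s := local_hilbert H t ht.1 s
    · calc H.act b t ≤ H.act (H.inner s' t) t := m_act_mono_left H t inf_le_right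
        _ ≤ s' := local_hilbert H t ht.1 s'
  have hb1 : Qf.mul (Qf.star b) b ≤ H.inner t t := by
    calc Qf.mul (Qf.star b) b
        ≤ Qf.mul (Qf.star (H.inner s t)) (H.inner s t) :=
          q_mul_mono Qf (q_star_mono Qf inf_le_left) inf_le_left
      _ = Qf.mul (H.inner t s) (H.inner s t) := by rw [m_star_inner]
      _ = H.inner (H.act (H.inner t s) s) t := (H.inner_act _ _ _).symm
      _ ≤ H.inner t t := m_inner_mono_left H t (local_hilbert H s hs.1 t)
  calc b ≤ Qf.mul (Qf.mul b (Qf.star b)) b := q_le_triple Qf b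
    _ = Qf.mul b (Qf.mul (Qf.star b) b) := Qf.mul_assoc _ _ _
    _ ≤ Qf.mul b (H.inner t t) := q_mul_mono Qf le_rfl hb1
    _ = H.inner (H.act b t) t := (H.inner_act _ _ _).symm
    _ ≤ H.inner (s ⊓ s') t := m_inner_mono_left H t hbt
end

section
/- Let Q and R be inverse quantal frames and X a Q-R-bisheaf satisfying ⋁_{s∈𝔅_X}⟨s,s⟩ = e_Q and ⋁_{s∈𝔅_X}[s,s] = e_R. Then the following are equivalent: (a) 1_X·ς'(s) ≤ 1_Q·s and ς_X(s)·1_X ≤ s·1_R for all s ∈ 𝔅_X (the conditions making X a biprincipal Q-R-bisheaf); (b) the interchange rule ⟨s,t⟩u = s[t,u] holds for all s, t, u ∈ 𝔅_X. -/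
section MonoHelpers

variable {α β : Type*} [CompleteLattice α] [CompleteLattice β]

lemma sSup_hom_mono {f : α → β} (h : ∀ S : Set α, f (sSup S) = ⨆ a ∈ S, f a)
    {a b : α} (hab : a ≤ b) : f a ≤ f b := by
  have h2 := h {a, b}
  rw [sSup_pair, sup_eq_right.mpr hab] at h2
  rw [h2]
  exact le_biSup _ (Set.mem_insert _ _)

lemma sSup_hom_iSup {f : α → β} (h : ∀ S : Set α, f (sSup S) = ⨆ a ∈ S, f a)
    {ι : Sort*} (g : ι → α) : f (⨆ i, g i) = ⨆ i, f (g i) := by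
  rw [iSup, h, iSup_range]

end MonoHelpers

namespace Quantale'

variable {Q : Type*} [CompleteLattice Q] (Qs : Quantale' Q)

lemma mul_mono {a b c d : Q} (h1 : a ≤ b) (h2 : c ≤ d) :
    Qs.mul a c ≤ Qs.mul b d :=
  le_trans (sSup_hom_mono (f := fun x => Qs.mul x c) (fun S => Qs.sSup_mul S c) h1)
    (sSup_hom_mono (f := fun x => Qs.mul b x) (Qs.mul_sSup b) h2)

lemma star_mono {a b : Q} (h : a ≤ b) : Qs.star a ≤ Qs.star b :=
  sSup_hom_mono Qs.star_sSup h

end Quantale'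

namespace InverseQuantalFrame

variable {Q : Type*} [Order.Frame Q] (Qf : InverseQuantalFrame Q)

/-- `a ≤ (a a*) a` in an inverse quantal frame. -/
lemma F4L (a : Q) : a ≤ Qf.mul (Qf.mul a (Qf.star a)) a :=
  le_trans (Qf.le_supp_mul a)
    (Qf.toQuantale'.mul_mono (Qf.supp_le_mul_star a) le_rfl)

/-- `a ≤ a (a* a)` in an inverse quantal frame. -/
lemma F4R (a : Q) : a ≤ Qf.mul a (Qf.mul (Qf.star a) a) := by
  have h := Qf.F4L (Qf.star a)
  rw [Qf.star_star] at h
  have h2 := Qf.toQuantale'.star_mono h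
  rw [Qf.star_star, Qf.star_mul, Qf.star_star, Qf.star_mul, Qf.star_star] at h2
  exact h2

end InverseQuantalFrame
/-- For a `Q`-`R`-bisheaf with full inner products
(`⋁_{s∈𝔅}⟨s,s⟩ = e_Q` and `⋁_{s∈𝔅}[s,s] = e_R`), biprincipality (conditions
`1_X·ς'(s) ≤ 1_Q·s` and `ς_X(s)·1_X ≤ s·1_R` for all local bisections `s`) is
equivalent to the interchange rule `⟨s,t⟩u = s[t,u]` on local bisections. -/
theorem stmt19 {Q R X : Type*} [Order.Frame Q] [Order.Frame R] [Order.Frame X]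
    (Qf : InverseQuantalFrame Q) (Rf : InverseQuantalFrame R)
    -- left Q-sheaf structure:
    (H : QSheaf Qf X)
    -- right R-action:
    (ract : X → R → X)
    (ract_mul : ∀ x r r', ract x (Rf.mul r r') = ract (ract x r) r')
    (ract_e : ∀ x, ract x Rf.e = x)
    (sSup_ract : ∀ (S : Set X) (r : R), ract (sSup S) r = ⨆ x ∈ S, ract x r)
    (ract_sSup : ∀ (x : X) (S : Set R), ract x (sSup S) = ⨆ r ∈ S, ract x r)
    (right_anchor : ∀ c x, c ≤ Rf.e → ract x c = ract ⊤ c ⊓ x)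
    (bimodule : ∀ a x r, ract (H.act a x) r = H.act a (ract x r))
    -- R-valued inner product:
    (rinner : X → X → R)
    (rinner_ract : ∀ x y r, rinner x (ract y r) = Rf.mul (rinner x y) r)
    (rinner_sSup : ∀ (x : X) (S : Set X), rinner x (sSup S) = ⨆ y ∈ S, rinner x y)
    (rinner_star : ∀ x y, rinner x y = Rf.star (rinner y x))
    -- the set of local bisections:
    (Bis : Set X)
    (hBis : Bis = {s : X | (∀ x, H.act (H.inner x s) s ≤ x) ∧
                           (∀ x, ract s (rinner s x) ≤ x)})
    -- the local bisections form a Hilbert basis for both structures: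
    (hcovL : ∀ x : X, x = ⨆ s ∈ Bis, H.act (H.inner x s) s)
    (hcovR : ∀ x : X, x = ⨆ s ∈ Bis, ract s (rinner s x))
    -- fullness hypotheses:
    (hfullL : (⨆ s ∈ Bis, H.inner s s) = Qf.e)
    (hfullR : (⨆ s ∈ Bis, rinner s s) = Rf.e) :
    ((∀ s ∈ Bis, ract ⊤ (rinner s s ⊓ Rf.e) ≤ H.act ⊤ s ∧
        H.act (H.sppX s) ⊤ ≤ ract s ⊤) ↔
      (∀ s ∈ Bis, ∀ t ∈ Bis, ∀ u ∈ Bis,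
        H.act (H.inner s t) u = ract s (rinner t u))) := by
  -- Monotonicity facts
  have QmulM : ∀ {a b c d : Q}, a ≤ b → c ≤ d → Qf.mul a c ≤ Qf.mul b d :=
    fun h1 h2 => Qf.toQuantale'.mul_mono h1 h2
  have RmulM : ∀ {a b c d : R}, a ≤ b → c ≤ d → Rf.mul a c ≤ Rf.mul b d :=
    fun h1 h2 => Rf.toQuantale'.mul_mono h1 h2
  have actM : ∀ {a b : Q} {x y : X}, a ≤ b → x ≤ y → H.act a x ≤ H.act b y := by
    intro a b x y h1 h2
    exact le_trans
      (sSup_hom_mono (f := fun q => H.act q x) (fun S => H.sSup_act S x) h1)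
      (sSup_hom_mono (f := fun z => H.act b z) (H.act_sSup b) h2)
  have ractM : ∀ {x y : X} {r r' : R}, x ≤ y → r ≤ r' → ract x r ≤ ract y r' := by
    intro x y r r' h1 h2
    exact le_trans
      (sSup_hom_mono (f := fun z => ract z r) (fun S => sSup_ract S r) h1)
      (sSup_hom_mono (f := fun q => ract y q) (ract_sSup y) h2)
  have innerM : ∀ {x y z w : X}, x ≤ y → z ≤ w → H.inner x z ≤ H.inner y w := by
    intro x y z w h1 h2
    have m1 : H.inner x z ≤ H.inner y z :=
      sSup_hom_mono (f := fun v => H.inner v z) (fun S => H.sSup_inner S z) h1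
    have m2 : H.inner y z ≤ H.inner y w := by
      rw [H.inner_star y z, H.inner_star y w]
      exact Qf.toQuantale'.star_mono
        (sSup_hom_mono (f := fun v => H.inner v y) (fun S => H.sSup_inner S y) h2)
    exact le_trans m1 m2
  have rinnerM : ∀ {x y z w : X}, x ≤ y → z ≤ w → rinner x z ≤ rinner y w := by
    intro x y z w h1 h2
    have m2 : rinner x z ≤ rinner x w :=
      sSup_hom_mono (f := fun v => rinner x v) (rinner_sSup x) h2
    have m1 : rinner x w ≤ rinner y w := by
      rw [rinner_star x w, rinner_star y w]
      exact Rf.toQuantale'.star_mono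
        (sSup_hom_mono (f := fun v => rinner w v) (rinner_sSup w) h1)
    exact le_trans m2 m1
  -- unpack bisections
  have hB1 : ∀ s ∈ Bis, ∀ x, H.act (H.inner x s) s ≤ x := by
    intro s hs; rw [hBis] at hs; exact hs.1
  have hB2 : ∀ s ∈ Bis, ∀ x, ract s (rinner s x) ≤ x := by
    intro s hs; rw [hBis] at hs; exact hs.2
  have hUL : ∀ s ∈ Bis, H.inner s s ≤ Qf.e := by
    intro s hs
    calc H.inner s s ≤ ⨆ t ∈ Bis, H.inner t t := le_biSup (fun t => H.inner t t) hs
    _ = Qf.e := hfullL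
  have hUR : ∀ s ∈ Bis, rinner s s ≤ Rf.e := by
    intro s hs
    calc rinner s s ≤ ⨆ t ∈ Bis, rinner t t := le_biSup (fun t => rinner t t) hs
    _ = Rf.e := hfullR
  -- every element is supported by its inner products
  have C1 : ∀ y : X, y ≤ H.act (H.inner y y) ⊤ := by
    intro y
    conv_lhs => rw [hcovL y]
    refine iSup₂_le fun v hv => ?_
    have key : H.inner y v ≤ Qf.mul (H.inner y y) (H.inner y v) := by
      have h1 := Qf.F4L (H.inner y v)
      have h2 : Qf.mul (H.inner y v) (Qf.star (H.inner y v)) ≤ H.inner y y := by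
        rw [← H.inner_star v y, ← H.inner_act]
        exact innerM (hB1 v hv y) le_rfl
      exact le_trans h1 (QmulM h2 le_rfl)
    calc H.act (H.inner y v) v
        ≤ H.act (Qf.mul (H.inner y y) (H.inner y v)) ⊤ := actM key le_top
      _ = H.act (H.inner y y) (H.act (H.inner y v) ⊤) := H.act_mul _ _ _
      _ ≤ H.act (H.inner y y) ⊤ := actM le_rfl le_top
  have C1' : ∀ y : X, y ≤ ract ⊤ (rinner y y) := by
    intro y
    conv_lhs => rw [hcovR y]
    refine iSup₂_le fun v hv => ?_
    have key : rinner v y ≤ Rf.mul (rinner v y) (rinner y y) := by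
      have h1 := Rf.F4R (rinner v y)
      have h2 : Rf.mul (Rf.star (rinner v y)) (rinner v y) ≤ rinner y y := by
        rw [← rinner_star y v, ← rinner_ract]
        exact rinnerM le_rfl (hB2 v hv y)
      exact le_trans h1 (RmulM le_rfl h2)
    calc ract v (rinner v y)
        ≤ ract ⊤ (Rf.mul (rinner v y) (rinner y y)) := ractM le_top key
      _ = ract (ract ⊤ (rinner v y)) (rinner y y) := ract_mul _ _ _
      _ ≤ ract ⊤ (rinner y y) := ractM le_top le_rfl
  -- principality lemmas
  have L2 : ∀ u : X, H.inner u u ≤ Qf.e → ∀ x, x ≤ H.act ⊤ u →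
      x ≤ H.act (H.inner x u) u := by
    intro u huu x hx
    have htop : H.act ⊤ u = ⨆ a ∈ {s : Q | Qf.mul s (Qf.star s) ≤ Qf.e ∧
        Qf.mul (Qf.star s) s ≤ Qf.e}, H.act a u := by
      rw [← Qf.sSup_PU]; exact H.sSup_act _ _
    have key : ∀ a : Q, Qf.mul a (Qf.star a) ≤ Qf.e → Qf.mul (Qf.star a) a ≤ Qf.e →
        x ⊓ H.act a u ≤ H.act (H.inner x u) u := by
      intro a ha1 ha2
      have h1 : x ⊓ H.act a u ≤ H.act (Qf.mul a (Qf.star a)) ⊤ := by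
        calc x ⊓ H.act a u ≤ H.act a u := inf_le_right
          _ ≤ H.act (Qf.mul (Qf.mul a (Qf.star a)) a) u := actM (Qf.F4L a) le_rfl
          _ = H.act (Qf.mul a (Qf.star a)) (H.act a u) := H.act_mul _ _ _
          _ ≤ H.act (Qf.mul a (Qf.star a)) ⊤ := actM le_rfl le_top
      have h2 : H.act (Qf.mul a (Qf.star a)) (x ⊓ H.act a u) = x ⊓ H.act a u := by
        rw [H.anchor _ _ ha1]
        exact inf_eq_right.mpr h1
      have hay : H.act a (H.act (Qf.star a) (x ⊓ H.act a u)) = x ⊓ H.act a u := by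
        rw [← H.act_mul]; exact h2
      have hyu : H.act (Qf.star a) (x ⊓ H.act a u) ≤ u := by
        calc H.act (Qf.star a) (x ⊓ H.act a u)
            ≤ H.act (Qf.star a) (H.act a u) := actM le_rfl inf_le_right
          _ = H.act (Qf.mul (Qf.star a) a) u := (H.act_mul _ _ _).symm
          _ = H.act (Qf.mul (Qf.star a) a) ⊤ ⊓ u := H.anchor _ _ ha2
          _ ≤ u := inf_le_right
      set y := H.act (Qf.star a) (x ⊓ H.act a u) with hy
      have hyy : H.inner y y ≤ Qf.e := le_trans (innerM hyu hyu) huu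
      have hy1 : y ≤ H.act (H.inner y y) y := by
        rw [H.anchor _ _ hyy]
        exact le_inf (C1 y) le_rfl
      have hy2 : y ≤ H.act (H.inner y u) u :=
        le_trans hy1 (actM (innerM le_rfl hyu) hyu)
      calc x ⊓ H.act a u = H.act a y := hay.symm
        _ ≤ H.act a (H.act (H.inner y u) u) := actM le_rfl hy2
        _ = H.act (Qf.mul a (H.inner y u)) u := (H.act_mul _ _ _).symm
        _ = H.act (H.inner (H.act a y) u) u := by rw [H.inner_act a y u]
        _ = H.act (H.inner (x ⊓ H.act a u) u) u := by rw [hay]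
        _ ≤ H.act (H.inner x u) u := actM (innerM inf_le_left le_rfl) le_rfl
    have hsplit : x = ⨆ a ∈ {s : Q | Qf.mul s (Qf.star s) ≤ Qf.e ∧
        Qf.mul (Qf.star s) s ≤ Qf.e}, (x ⊓ H.act a u) := by
      calc x = x ⊓ H.act ⊤ u := (inf_eq_left.mpr hx).symm
        _ = ⨆ a ∈ {s : Q | Qf.mul s (Qf.star s) ≤ Qf.e ∧
            Qf.mul (Qf.star s) s ≤ Qf.e}, (x ⊓ H.act a u) := by
          rw [htop]; simp only [inf_iSup_eq]
    calc x = ⨆ a ∈ {s : Q | Qf.mul s (Qf.star s) ≤ Qf.e ∧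
        Qf.mul (Qf.star s) s ≤ Qf.e}, (x ⊓ H.act a u) := hsplit
      _ ≤ H.act (H.inner x u) u := iSup₂_le fun a ha => key a ha.1 ha.2
  have L2' : ∀ u : X, rinner u u ≤ Rf.e → ∀ x, x ≤ ract u ⊤ →
      x ≤ ract u (rinner u x) := by
    intro u huu x hx
    have htop : ract u ⊤ = ⨆ r ∈ {s : R | Rf.mul s (Rf.star s) ≤ Rf.e ∧
        Rf.mul (Rf.star s) s ≤ Rf.e}, ract u r := by
      rw [← Rf.sSup_PU]; exact ract_sSup _ _
    have key : ∀ r : R, Rf.mul r (Rf.star r) ≤ Rf.e → Rf.mul (Rf.star r) r ≤ Rf.e →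
        x ⊓ ract u r ≤ ract u (rinner u x) := by
      intro r hr1 hr2
      have h1 : x ⊓ ract u r ≤ ract ⊤ (Rf.mul (Rf.star r) r) := by
        calc x ⊓ ract u r ≤ ract u r := inf_le_right
          _ ≤ ract u (Rf.mul r (Rf.mul (Rf.star r) r)) := ractM le_rfl (Rf.F4R r)
          _ = ract (ract u r) (Rf.mul (Rf.star r) r) := ract_mul _ _ _
          _ ≤ ract ⊤ (Rf.mul (Rf.star r) r) := ractM le_top le_rfl
      have h2 : ract (x ⊓ ract u r) (Rf.mul (Rf.star r) r) = x ⊓ ract u r := by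
        rw [right_anchor _ _ hr2]
        exact inf_eq_right.mpr h1
      have hay : ract (ract (x ⊓ ract u r) (Rf.star r)) r = x ⊓ ract u r := by
        rw [← ract_mul]; exact h2
      have hyu : ract (x ⊓ ract u r) (Rf.star r) ≤ u := by
        calc ract (x ⊓ ract u r) (Rf.star r)
            ≤ ract (ract u r) (Rf.star r) := ractM inf_le_right le_rfl
          _ = ract u (Rf.mul r (Rf.star r)) := (ract_mul _ _ _).symm
          _ = ract ⊤ (Rf.mul r (Rf.star r)) ⊓ u := right_anchor _ _ hr1
          _ ≤ u := inf_le_right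
      set y := ract (x ⊓ ract u r) (Rf.star r) with hy
      have hyy : rinner y y ≤ Rf.e := le_trans (rinnerM hyu hyu) huu
      have hy1 : y ≤ ract y (rinner y y) := by
        rw [right_anchor _ _ hyy]
        exact le_inf (C1' y) le_rfl
      have hy2 : y ≤ ract u (rinner u y) :=
        le_trans hy1 (ractM hyu (rinnerM hyu le_rfl))
      calc x ⊓ ract u r = ract y r := hay.symm
        _ ≤ ract (ract u (rinner u y)) r := ractM hy2 le_rfl
        _ = ract u (Rf.mul (rinner u y) r) := (ract_mul _ _ _).symm
        _ = ract u (rinner u (ract y r)) := by rw [rinner_ract u y r]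
        _ = ract u (rinner u (x ⊓ ract u r)) := by rw [hay]
        _ ≤ ract u (rinner u x) := ractM le_rfl (rinnerM le_rfl inf_le_left)
    have hsplit : x = ⨆ r ∈ {s : R | Rf.mul s (Rf.star s) ≤ Rf.e ∧
        Rf.mul (Rf.star s) s ≤ Rf.e}, (x ⊓ ract u r) := by
      calc x = x ⊓ ract u ⊤ := (inf_eq_left.mpr hx).symm
        _ = ⨆ r ∈ {s : R | Rf.mul s (Rf.star s) ≤ Rf.e ∧
            Rf.mul (Rf.star s) s ≤ Rf.e}, (x ⊓ ract u r) := by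
          rw [htop]; simp only [inf_iSup_eq]
    calc x = ⨆ r ∈ {s : R | Rf.mul s (Rf.star s) ≤ Rf.e ∧
        Rf.mul (Rf.star s) s ≤ Rf.e}, (x ⊓ ract u r) := hsplit
      _ ≤ ract u (rinner u x) := iSup₂_le fun r hr => key r hr.1 hr.2
  constructor
  · -- biprincipality → interchange
    intro hA s hs t ht u hu
    have htt : H.inner t t ≤ Qf.e := hUL t ht
    have hrtt : rinner t t ≤ Rf.e := hUR t ht
    have ha2t : H.act (H.inner t t) ⊤ ≤ ract t ⊤ := by
      have h := (hA t ht).2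
      simp only [QSheaf.sppX] at h
      rwa [inf_eq_left.mpr htt] at h
    have ha1t : ract ⊤ (rinner t t) ≤ H.act ⊤ t := by
      have h := (hA t ht).1
      rwa [inf_eq_left.mpr hrtt] at h
    apply le_antisymm
    · have key1 : H.inner s t ≤ Qf.mul (H.inner s t) (H.inner t t) := by
        have h1 := Qf.F4R (H.inner s t)
        have h2 : Qf.mul (Qf.star (H.inner s t)) (H.inner s t) ≤ H.inner t t := by
          rw [← H.inner_star t s, ← H.inner_act]
          exact innerM (hB1 s hs t) le_rfl
        exact le_trans h1 (QmulM le_rfl h2)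
      have hw : H.act (H.inner t t) ⊤ ⊓ u ≤ ract t (rinner t u) := by
        have hwle : H.act (H.inner t t) ⊤ ⊓ u ≤ ract t ⊤ :=
          le_trans inf_le_left ha2t
        calc H.act (H.inner t t) ⊤ ⊓ u
            ≤ ract t (rinner t (H.act (H.inner t t) ⊤ ⊓ u)) := L2' t hrtt _ hwle
          _ ≤ ract t (rinner t u) := ractM le_rfl (rinnerM le_rfl inf_le_right)
      calc H.act (H.inner s t) u
          ≤ H.act (Qf.mul (H.inner s t) (H.inner t t)) u := actM key1 le_rfl
        _ = H.act (H.inner s t) (H.act (H.inner t t) u) := H.act_mul _ _ _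
        _ = H.act (H.inner s t) (H.act (H.inner t t) ⊤ ⊓ u) := by
            rw [H.anchor _ _ htt]
        _ ≤ H.act (H.inner s t) (ract t (rinner t u)) := actM le_rfl hw
        _ = ract (H.act (H.inner s t) t) (rinner t u) := (bimodule _ _ _).symm
        _ ≤ ract s (rinner t u) := ractM (hB1 t ht s) le_rfl
    · have key2 : rinner t u ≤ Rf.mul (rinner t t) (rinner t u) := by
        have h1 := Rf.F4L (rinner t u)
        have h2 : Rf.mul (rinner t u) (Rf.star (rinner t u)) ≤ rinner t t := by
          rw [← rinner_star u t, ← rinner_ract]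
          exact rinnerM le_rfl (hB2 u hu t)
        exact le_trans h1 (RmulM h2 le_rfl)
      have hw : H.act ⊤ t ⊓ s ≤ H.act (H.inner (H.act ⊤ t ⊓ s) t) t :=
        L2 t htt _ inf_le_left
      calc ract s (rinner t u)
          ≤ ract s (Rf.mul (rinner t t) (rinner t u)) := ractM le_rfl key2
        _ = ract (ract s (rinner t t)) (rinner t u) := ract_mul _ _ _
        _ = ract (ract ⊤ (rinner t t) ⊓ s) (rinner t u) := by
            rw [right_anchor _ _ hrtt]
        _ ≤ ract (H.act ⊤ t ⊓ s) (rinner t u) :=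
            ractM (inf_le_inf_right _ ha1t) le_rfl
        _ ≤ ract (H.act (H.inner (H.act ⊤ t ⊓ s) t) t) (rinner t u) :=
            ractM hw le_rfl
        _ = H.act (H.inner (H.act ⊤ t ⊓ s) t) (ract t (rinner t u)) :=
            bimodule _ _ _
        _ ≤ H.act (H.inner s t) u :=
            actM (innerM inf_le_right le_rfl) (hB2 t ht u)
  · -- interchange → biprincipality
    intro hI s hs
    have hss : H.inner s s ≤ Qf.e := hUL s hs
    have hrss : rinner s s ≤ Rf.e := hUR s hs
    constructor
    · rw [inf_eq_left.mpr hrss]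
      calc ract ⊤ (rinner s s)
          = ract (⨆ t ∈ Bis, H.act (H.inner ⊤ t) t) (rinner s s) := by
            rw [← hcovL (⊤ : X)]
        _ = ⨆ t ∈ Bis, ract (H.act (H.inner ⊤ t) t) (rinner s s) := by
            rw [sSup_hom_iSup (f := fun z => ract z (rinner s s))
              (fun S => sSup_ract S _)]
            exact iSup_congr fun t => sSup_hom_iSup
              (f := fun z => ract z (rinner s s)) (fun S => sSup_ract S _) _
        _ ≤ H.act ⊤ s := by
            refine iSup₂_le fun t htB => ?_
            calc ract (H.act (H.inner ⊤ t) t) (rinner s s)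
                = H.act (H.inner ⊤ t) (ract t (rinner s s)) := bimodule _ _ _
              _ = H.act (H.inner ⊤ t) (H.act (H.inner t s) s) := by
                  rw [← hI t htB s hs s hs]
              _ = H.act (Qf.mul (H.inner ⊤ t) (H.inner t s)) s :=
                  (H.act_mul _ _ _).symm
              _ ≤ H.act ⊤ s := actM le_top le_rfl
    · simp only [QSheaf.sppX]
      rw [inf_eq_left.mpr hss]
      calc H.act (H.inner s s) ⊤
          = H.act (H.inner s s) (⨆ t ∈ Bis, ract t (rinner t ⊤)) := by
            rw [← hcovR (⊤ : X)]
        _ = ⨆ t ∈ Bis, H.act (H.inner s s) (ract t (rinner t ⊤)) := by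
            rw [sSup_hom_iSup (f := fun z => H.act (H.inner s s) z)
              (H.act_sSup _)]
            exact iSup_congr fun t => sSup_hom_iSup
              (f := fun z => H.act (H.inner s s) z) (H.act_sSup _) _
        _ ≤ ract s ⊤ := by
            refine iSup₂_le fun t htB => ?_
            calc H.act (H.inner s s) (ract t (rinner t ⊤))
                = ract (H.act (H.inner s s) t) (rinner t ⊤) :=
                  (bimodule _ _ _).symm
              _ = ract (ract s (rinner s t)) (rinner t ⊤) := by
                  rw [hI s hs s hs t htB]
              _ = ract s (Rf.mul (rinner s t) (rinner t ⊤)) :=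
                  (ract_mul _ _ _).symm
              _ ≤ ract s ⊤ := ractM le_rfl le_top
end
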